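/- Let (X,μ) and (Y,ν) be σ-finite measure spaces and f ∈ L¹(X,μ)⁺, g ∈ L¹(Y,ν)⁺. If ∫(f−t)₊ dμ ≥ ∫(g−t)₊ dν for all t ≥ 0, then for every convex function φ : ℝ≥0 → ℝ≥0 with φ(0) = 0 one has ∫_X φ∘f dμ ≥ ∫_Y φ∘g dν. -/

import Mathlib

open MeasureTheory Set Filter
open scoped ENNReal Topology

namespace Stmt4Aux

/-- Cumulative slope of the approximant: chord slope of `φ` over `[(k-1)h, kh]`. -/
noncomputable def C (φ : ℝ → ℝ) (h : ℝ) : ℕ → ℝ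
  | 0 => 0
  | (k+1) => (φ (((k : ℝ) + 1) * h) - φ ((k : ℝ) * h)) / h

/-- Value of the approximant at the node `Kh`. -/
noncomputable def A (φ : ℝ → ℝ) (h : ℝ) : ℕ → ℝ
  | 0 => 0
  | (k+1) => φ ((k : ℝ) * h)

/-- Piecewise linear lower approximant, a nonnegative combination of `(s - t)₊`. -/
noncomputable def psi (φ : ℝ → ℝ) (h : ℝ) (K : ℕ) (s : ℝ) : ℝ :=
  ∑ k ∈ Finset.range K, (C φ h (k+1) - C φ h k) * max (s - ((k : ℝ) + 1) * h) 0

section Core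

variable {φ : ℝ → ℝ} {h : ℝ}

lemma phi_mono (hφconv : ConvexOn ℝ (Set.Ici (0:ℝ)) φ)
    (hφpos : ∀ s : ℝ, 0 ≤ s → 0 ≤ φ s) (hφ0 : φ 0 = 0)
    {a b : ℝ} (ha : 0 ≤ a) (hab : a ≤ b) : φ a ≤ φ b := by
  rcases eq_or_lt_of_le hab with rfl | hab
  · exact le_rfl
  rcases eq_or_lt_of_le ha with rfl | ha
  · rw [hφ0]; exact hφpos b hab.le
  have hb : 0 < b := ha.trans hab
  have hab1 : a / b ≤ 1 := by rw [div_le_one hb]; exact hab.le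
  have key := hφconv.2 (Set.mem_Ici.2 le_rfl) (Set.mem_Ici.2 hb.le)
    (by linarith : (0:ℝ) ≤ 1 - a / b) (by positivity : (0:ℝ) ≤ a / b) (by ring)
  simp only [smul_eq_mul, mul_zero, zero_add] at key
  rw [div_mul_cancel₀ _ hb.ne'] at key
  calc φ a ≤ (1 - a / b) * φ 0 + a / b * φ b := key
    _ = a / b * φ b := by rw [hφ0]; ring
    _ ≤ 1 * φ b := by
        refine mul_le_mul_of_nonneg_right ?_ (hφpos b hb.le)
        rw [div_le_one hb]; exact hab.le
    _ = φ b := one_mul _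

lemma C_nonneg (hφconv : ConvexOn ℝ (Set.Ici (0:ℝ)) φ)
    (hφpos : ∀ s : ℝ, 0 ≤ s → 0 ≤ φ s) (hφ0 : φ 0 = 0) (hh : 0 < h) (k : ℕ) :
    0 ≤ C φ h k := by
  cases k with
  | zero => simp [C]
  | succ j =>
    refine div_nonneg (sub_nonneg.2 ?_) hh.le
    exact phi_mono hφconv hφpos hφ0 (mul_nonneg (Nat.cast_nonneg _) hh.le) (by nlinarith)

lemma C_mono (hφconv : ConvexOn ℝ (Set.Ici (0:ℝ)) φ)
    (hφpos : ∀ s : ℝ, 0 ≤ s → 0 ≤ φ s) (hφ0 : φ 0 = 0) (hh : 0 < h) (k : ℕ) :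
    C φ h k ≤ C φ h (k+1) := by
  cases k with
  | zero => simpa [C] using C_nonneg hφconv hφpos hφ0 hh 1
  | succ j =>
    have h1 : (j : ℝ) * h < ((j : ℝ) + 1) * h := by nlinarith
    have h2 : ((j : ℝ) + 1) * h < ((j : ℝ) + 1 + 1) * h := by nlinarith
    have key := hφconv.slope_mono_adjacent
      (Set.mem_Ici.2 (mul_nonneg (Nat.cast_nonneg _) hh.le))
      (Set.mem_Ici.2 (by positivity : (0:ℝ) ≤ ((j : ℝ) + 1 + 1) * h)) h1 h2
    have e1 : ((j : ℝ) + 1) * h - (j : ℝ) * h = h := by ring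
    have e2 : ((j : ℝ) + 1 + 1) * h - ((j : ℝ) + 1) * h = h := by ring
    rw [e1, e2] at key
    simp only [C, Nat.cast_succ]
    exact key

lemma A_rec (hφ0 : φ 0 = 0) (hh : 0 < h) (K : ℕ) :
    A φ h (K+1) = A φ h K + C φ h K * h := by
  cases K with
  | zero => simp [A, C, hφ0]
  | succ j =>
    simp only [A, C, Nat.cast_succ]
    field_simp
    ring

lemma psi_succ (K : ℕ) (s : ℝ) :
    psi φ h (K+1) s = psi φ h K s
      + (C φ h (K+1) - C φ h K) * max (s - ((K : ℝ) + 1) * h) 0 :=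
  Finset.sum_range_succ _ _

lemma psi_nonneg (hφconv : ConvexOn ℝ (Set.Ici (0:ℝ)) φ)
    (hφpos : ∀ s : ℝ, 0 ≤ s → 0 ≤ φ s) (hφ0 : φ 0 = 0) (hh : 0 < h) (K : ℕ) (s : ℝ) :
    0 ≤ psi φ h K s := by
  refine Finset.sum_nonneg fun k _ => mul_nonneg ?_ (le_max_right _ _)
  exact sub_nonneg.2 (C_mono hφconv hφpos hφ0 hh k)

lemma psi_eq_of_node_le (hφ0 : φ 0 = 0) (hh : 0 < h) :
    ∀ K : ℕ, ∀ s : ℝ, (K : ℝ) * h ≤ s →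
      psi φ h K s = A φ h K + C φ h K * (s - (K : ℝ) * h) := by
  intro K
  induction K with
  | zero => intro s _; simp [psi, A, C]
  | succ j ih =>
    intro s hs
    have hj : (j : ℝ) * h ≤ s := by
      push_cast at hs ⊢; nlinarith
    have hmax : max (s - ((j : ℝ) + 1) * h) 0 = s - ((j : ℝ) + 1) * h := by
      push_cast at hs; rw [max_eq_left]; linarith
    rw [psi_succ, ih s hj, hmax, A_rec hφ0 hh]
    push_cast
    ring

lemma psi_freeze (hh : 0 < h) :
    ∀ K m : ℕ, ∀ s : ℝ, s ≤ ((m : ℝ) + 1) * h → m + 1 ≤ K →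
      psi φ h K s = psi φ h (m+1) s := by
  intro K
  induction K with
  | zero => intro m s _ hm; omega
  | succ j ih =>
    intro m s hs hm
    rcases eq_or_lt_of_le hm with he | hlt
    · rw [he]
    · have hmj : m + 1 ≤ j := by omega
      have hmax : max (s - ((j : ℝ) + 1) * h) 0 = 0 := by
        rw [max_eq_right]
        have : ((m : ℝ) + 1) * h ≤ ((j : ℝ) + 1) * h := by
          have : (m : ℝ) + 1 ≤ (j : ℝ) + 1 := by exact_mod_cast by omega
          nlinarith
        linarith
      rw [psi_succ, hmax, mul_zero, add_zero, ih m s hs hmj]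

lemma psi_le (hφconv : ConvexOn ℝ (Set.Ici (0:ℝ)) φ)
    (hφpos : ∀ s : ℝ, 0 ≤ s → 0 ≤ φ s) (hφ0 : φ 0 = 0) (hh : 0 < h)
    (K : ℕ) {s : ℝ} (hs : 0 ≤ s) : psi φ h K s ≤ φ s := by
  obtain ⟨m, hm1, hm2⟩ : ∃ m : ℕ, (m : ℝ) * h ≤ s ∧ s < ((m : ℝ) + 1) * h := by
    refine ⟨Nat.floor (s / h), ?_, ?_⟩
    · have := Nat.floor_le (div_nonneg hs hh.le)
      calc ((Nat.floor (s / h) : ℝ)) * h ≤ (s / h) * h := by nlinarith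
        _ = s := by field_simp
    · have := Nat.lt_floor_add_one (s / h)
      calc s = (s / h) * h := by field_simp
        _ < ((Nat.floor (s / h) : ℝ) + 1) * h := by nlinarith
  by_cases hKm : K ≤ m
  · have hKs : (K : ℝ) * h ≤ s := by
      have : (K : ℝ) ≤ (m : ℝ) := by exact_mod_cast hKm
      nlinarith
    rw [psi_eq_of_node_le hφ0 hh K s hKs]
    cases K with
    | zero => simpa [A, C] using hφpos s hs
    | succ j =>
      simp only [A, C]
      push_cast at hKs ⊢
      rcases eq_or_lt_of_le hKs with he | hlt
      · rw [← he]
        have : φ ((j : ℝ) * h) ≤ φ (((j : ℝ) + 1) * h) :=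
          phi_mono hφconv hφpos hφ0 (mul_nonneg (Nat.cast_nonneg _) hh.le) (by nlinarith)
        simpa using this
      · have h1 : (j : ℝ) * h < ((j : ℝ) + 1) * h := by nlinarith
        have key := hφconv.slope_mono_adjacent
          (Set.mem_Ici.2 (mul_nonneg (Nat.cast_nonneg _) hh.le))
          (Set.mem_Ici.2 hs) h1 hlt
        have e1 : ((j : ℝ) + 1) * h - (j : ℝ) * h = h := by ring
        rw [e1] at key
        have hpos : 0 < s - ((j : ℝ) + 1) * h := by linarith
        have key2 : (φ (((j : ℝ) + 1) * h) - φ ((j : ℝ) * h)) / h * (s - ((j : ℝ) + 1) * h)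
            ≤ φ s - φ (((j : ℝ) + 1) * h) := by
          rw [← le_div_iff₀ hpos]; exact key
        have hmono : φ ((j : ℝ) * h) ≤ φ (((j : ℝ) + 1) * h) :=
          phi_mono hφconv hφpos hφ0 (mul_nonneg (Nat.cast_nonneg _) hh.le) (by nlinarith)
        linarith
  · push_neg at hKm
    have hm1K : m + 1 ≤ K := hKm
    rw [psi_freeze hh K m s hm2.le hm1K, psi_succ]
    have hmax : max (s - ((m : ℝ) + 1) * h) 0 = 0 := by
      rw [max_eq_right]; linarith
    rw [hmax, mul_zero, add_zero, psi_eq_of_node_le hφ0 hh m s hm1]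
    cases m with
    | zero => simpa [A, C] using hφpos s hs
    | succ j =>
      simp only [A, C]
      push_cast at hm1 hm2 ⊢
      have hC : 0 ≤ (φ (((j : ℝ) + 1) * h) - φ ((j : ℝ) * h)) / h := by
        have := C_nonneg hφconv hφpos hφ0 hh (j+1)
        simpa [C] using this
      have hsh : s - ((j : ℝ) + 1) * h ≤ h := by linarith
      have step : (φ (((j : ℝ) + 1) * h) - φ ((j : ℝ) * h)) / h * (s - ((j : ℝ) + 1) * h)
          ≤ φ (((j : ℝ) + 1) * h) - φ ((j : ℝ) * h) := by
        calc (φ (((j : ℝ) + 1) * h) - φ ((j : ℝ) * h)) / h * (s - ((j : ℝ) + 1) * h)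
            ≤ (φ (((j : ℝ) + 1) * h) - φ ((j : ℝ) * h)) / h * h :=
              mul_le_mul_of_nonneg_left hsh hC
          _ = φ (((j : ℝ) + 1) * h) - φ ((j : ℝ) * h) := by field_simp
      have hmono : φ (((j : ℝ) + 1) * h) ≤ φ s :=
        phi_mono hφconv hφpos hφ0 (mul_nonneg (by positivity) hh.le) (by linarith)
      linarith

lemma le_psi (hφconv : ConvexOn ℝ (Set.Ici (0:ℝ)) φ)
    (hφpos : ∀ s : ℝ, 0 ≤ s → 0 ≤ φ s) (hφ0 : φ 0 = 0) (hh : 0 < h)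
    (K : ℕ) {s : ℝ} (hs : 0 ≤ s) (hsK : s ≤ (K : ℝ) * h) :
    φ (max (s - 2 * h) 0) ≤ psi φ h K s := by
  obtain ⟨m, hm1, hm2⟩ : ∃ m : ℕ, (m : ℝ) * h ≤ s ∧ s < ((m : ℝ) + 1) * h := by
    refine ⟨Nat.floor (s / h), ?_, ?_⟩
    · have := Nat.floor_le (div_nonneg hs hh.le)
      calc ((Nat.floor (s / h) : ℝ)) * h ≤ (s / h) * h := by nlinarith
        _ = s := by field_simp
    · have := Nat.lt_floor_add_one (s / h)
      calc s = (s / h) * h := by field_simp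
        _ < ((Nat.floor (s / h) : ℝ) + 1) * h := by nlinarith
  by_cases hKm : K ≤ m
  · have hKs : (K : ℝ) * h ≤ s := by
      have : (K : ℝ) ≤ (m : ℝ) := by exact_mod_cast hKm
      nlinarith
    have hse : s = (K : ℝ) * h := le_antisymm hsK hKs
    rw [psi_eq_of_node_le hφ0 hh K s hKs]
    cases K with
    | zero =>
      have hs0 : s = 0 := by simpa using hse
      simp [A, C, hs0, hφ0, max_eq_right (by linarith : -(2*h) ≤ (0:ℝ))]
    | succ j =>
      simp only [A, C]
      have harg : max (s - 2 * h) 0 ≤ (j : ℝ) * h := by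
        refine max_le ?_ (mul_nonneg (Nat.cast_nonneg _) hh.le)
        push_cast at hse; nlinarith
      have := phi_mono hφconv hφpos hφ0 (le_max_right _ _) harg
      have hC := C_nonneg hφconv hφpos hφ0 hh (j+1)
      simp only [C] at hC
      nlinarith
  · push_neg at hKm
    rw [psi_freeze hh K m s hm2.le hKm, psi_succ]
    have hmax : max (s - ((m : ℝ) + 1) * h) 0 = 0 := by
      rw [max_eq_right]; linarith
    rw [hmax, mul_zero, add_zero, psi_eq_of_node_le hφ0 hh m s hm1]
    have hC := C_nonneg hφconv hφpos hφ0 hh m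
    cases m with
    | zero =>
      have : max (s - 2 * h) 0 = 0 := by
        rw [max_eq_right]
        push_cast at hm2; linarith
      simp [A, C, this, hφ0]
    | succ j =>
      simp only [A]
      have harg : max (s - 2 * h) 0 ≤ (j : ℝ) * h := by
        refine max_le ?_ (mul_nonneg (Nat.cast_nonneg _) hh.le)
        push_cast at hm2; linarith
      have h1 := phi_mono hφconv hφpos hφ0 (le_max_right _ _) harg
      nlinarith

lemma psi_continuous (K : ℕ) : Continuous (psi φ h K) := by
  refine continuous_finset_sum _ fun k _ => ?_
  exact continuous_const.mul ((continuous_id.sub continuous_const).max continuous_const)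

end Core

/-- mesh sequence -/
noncomputable def hseq (n : ℕ) : ℝ := 1 / ((n : ℝ) + 1)

/-- number of nodes -/
def Kseq (n : ℕ) : ℕ := (n + 1) * (n + 1)

lemma hseq_pos (n : ℕ) : 0 < hseq n := by unfold hseq; positivity

lemma Kseq_h (n : ℕ) : (Kseq n : ℝ) * hseq n = (n : ℝ) + 1 := by
  have hne : ((n : ℝ) + 1) ≠ 0 := by positivity
  unfold Kseq hseq
  push_cast
  field_simp

lemma psi_tendsto {φ : ℝ → ℝ}
    (hφconv : ConvexOn ℝ (Set.Ici (0:ℝ)) φ)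
    (hφpos : ∀ s : ℝ, 0 ≤ s → 0 ≤ φ s) (hφ0 : φ 0 = 0)
    {s : ℝ} (hs : 0 ≤ s) :
    Tendsto (fun n => psi φ (hseq n) (Kseq n) s) atTop (𝓝 (φ s)) := by
  have hupper : ∀ n, psi φ (hseq n) (Kseq n) s ≤ φ s :=
    fun n => psi_le hφconv hφpos hφ0 (hseq_pos n) _ hs
  have hlower : ∀ᶠ n in atTop, φ (max (s - 2 * hseq n) 0) ≤ psi φ (hseq n) (Kseq n) s := by
    filter_upwards [eventually_ge_atTop (Nat.ceil s)] with n hn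
    refine le_psi hφconv hφpos hφ0 (hseq_pos n) _ hs ?_
    rw [Kseq_h]
    calc s ≤ (Nat.ceil s : ℝ) := Nat.le_ceil s
      _ ≤ (n : ℝ) := by exact_mod_cast hn
      _ ≤ (n : ℝ) + 1 := by linarith
  have harg : Tendsto (fun n => max (s - 2 * hseq n) 0) atTop (𝓝 s) := by
    have hh0 : Tendsto hseq atTop (𝓝 0) := by
      unfold hseq
      exact tendsto_one_div_add_atTop_nhds_zero_nat
    have : Tendsto (fun n => max (s - 2 * hseq n) 0) atTop (𝓝 (max (s - 2 * 0) 0)) :=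
      (tendsto_const_nhds.sub (hh0.const_mul 2)).max tendsto_const_nhds
    simpa [max_eq_left hs] using this
  have hφlim : Tendsto (fun n => φ (max (s - 2 * hseq n) 0)) atTop (𝓝 (φ s)) := by
    rcases eq_or_lt_of_le hs with rfl | hs'
    · have heq : ∀ n, φ (max ((0:ℝ) - 2 * hseq n) 0) = φ 0 := fun n => by
        have := hseq_pos n
        rw [max_eq_right (by linarith)]
      simp only [heq]
      exact tendsto_const_nhds
    · have hcont : ContinuousAt φ s := by
        have h1 : ContinuousOn φ (interior (Set.Ici (0:ℝ))) :=
          hφconv.continuousOn_interior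
        rw [interior_Ici] at h1
        exact h1.continuousAt (isOpen_Ioi.mem_nhds hs')
      exact hcont.tendsto.comp harg
  exact tendsto_of_tendsto_of_tendsto_of_le_of_le' hφlim tendsto_const_nhds hlower
    (Eventually.of_forall hupper)

lemma trunc_integrable {Z : Type*} [MeasurableSpace Z] (ρ : MeasureTheory.Measure Z)
    (u : Z → ℝ) (hu : MeasureTheory.Integrable u ρ) (hupos : ∀ z, 0 ≤ u z)
    (t : ℝ) (ht : 0 ≤ t) :
    MeasureTheory.Integrable (fun z => max (u z - t) 0) ρ := by
  refine hu.mono ((hu.1.sub aestronglyMeasurable_const).sup aestronglyMeasurable_const) ?_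
  refine Eventually.of_forall fun z => ?_
  rw [Real.norm_eq_abs, Real.norm_eq_abs, abs_of_nonneg (le_max_right _ _),
    abs_of_nonneg (hupos z)]
  exact max_le (by linarith [hupos z]) (hupos z)

end Stmt4Aux

open Stmt4Aux

/-- If `∫ (f − t)₊ dμ ≥ ∫ (g − t)₊ dν` for all `t ≥ 0`, then for every convex
`φ : ℝ≥0 → ℝ≥0` with `φ 0 = 0` one has `∫ φ∘f dμ ≥ ∫ φ∘g dν`. -/
theorem stmt4 {X Y : Type*} [MeasurableSpace X] [MeasurableSpace Y]
    (μ : Measure X) (ν : Measure Y) [SigmaFinite μ] [SigmaFinite ν]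
    (f : X → ℝ) (g : Y → ℝ) (hf : Integrable f μ) (hg : Integrable g ν)
    (hfpos : ∀ x, 0 ≤ f x) (hgpos : ∀ y, 0 ≤ g y)
    (hmaj : ∀ t : ℝ, 0 ≤ t →
      ∫ y, max (g y - t) 0 ∂ν ≤ ∫ x, max (f x - t) 0 ∂μ)
    (φ : ℝ → ℝ) (hφconv : ConvexOn ℝ (Set.Ici (0 : ℝ)) φ)
    (hφpos : ∀ s : ℝ, 0 ≤ s → 0 ≤ φ s) (hφ0 : φ 0 = 0) :
    ∫⁻ y, ENNReal.ofReal (φ (g y)) ∂ν ≤ ∫⁻ x, ENNReal.ofReal (φ (f x)) ∂μ := by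
  -- key inequality for each approximant
  have key : ∀ n : ℕ, ∫⁻ y, ENNReal.ofReal (psi φ (hseq n) (Kseq n) (g y)) ∂ν
      ≤ ∫⁻ x, ENNReal.ofReal (φ (f x)) ∂μ := by
    intro n
    set h := hseq n with hhdef
    set K := Kseq n with hKdef
    have hh : 0 < h := hseq_pos n
    have htpos : ∀ k : ℕ, (0:ℝ) ≤ ((k : ℝ) + 1) * h := fun k => by positivity
    have hintg : ∀ k : ℕ, Integrable (fun y => max (g y - ((k : ℝ) + 1) * h) 0) ν :=
      fun k => trunc_integrable ν g hg hgpos _ (htpos k)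
    have hintf : ∀ k : ℕ, Integrable (fun x => max (f x - ((k : ℝ) + 1) * h) 0) μ :=
      fun k => trunc_integrable μ f hf hfpos _ (htpos k)
    have hcnn : ∀ k : ℕ, 0 ≤ C φ h (k+1) - C φ h k :=
      fun k => sub_nonneg.2 (C_mono hφconv hφpos hφ0 hh k)
    have hintpsig : Integrable (fun y => psi φ h K (g y)) ν := by
      unfold psi
      exact integrable_finset_sum _ fun k _ => (hintg k).const_mul _
    have hintpsif : Integrable (fun x => psi φ h K (f x)) μ := by
      unfold psi
      exact integrable_finset_sum _ fun k _ => (hintf k).const_mul _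
    have hsum : ∫ y, psi φ h K (g y) ∂ν ≤ ∫ x, psi φ h K (f x) ∂μ := by
      unfold psi
      rw [integral_finset_sum _ fun k _ => (hintg k).const_mul _,
        integral_finset_sum _ fun k _ => (hintf k).const_mul _]
      refine Finset.sum_le_sum fun k _ => ?_
      rw [integral_const_mul, integral_const_mul]
      exact mul_le_mul_of_nonneg_left (hmaj _ (htpos k)) (hcnn k)
    calc ∫⁻ y, ENNReal.ofReal (psi φ h K (g y)) ∂ν
        = ENNReal.ofReal (∫ y, psi φ h K (g y) ∂ν) :=
          (ofReal_integral_eq_lintegral_ofReal hintpsig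
            (Eventually.of_forall fun y => psi_nonneg hφconv hφpos hφ0 hh K (g y))).symm
      _ ≤ ENNReal.ofReal (∫ x, psi φ h K (f x) ∂μ) := ENNReal.ofReal_le_ofReal hsum
      _ = ∫⁻ x, ENNReal.ofReal (psi φ h K (f x)) ∂μ :=
          ofReal_integral_eq_lintegral_ofReal hintpsif
            (Eventually.of_forall fun x => psi_nonneg hφconv hφpos hφ0 hh K (f x))
      _ ≤ ∫⁻ x, ENNReal.ofReal (φ (f x)) ∂μ := by
          refine lintegral_mono fun x => ENNReal.ofReal_le_ofReal ?_
          exact psi_le hφconv hφpos hφ0 hh K (hfpos x)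
  -- measurability
  have hmeas : ∀ n : ℕ, AEMeasurable (fun y => ENNReal.ofReal (psi φ (hseq n) (Kseq n) (g y))) ν := by
    intro n
    exact ENNReal.measurable_ofReal.comp_aemeasurable
      ((psi_continuous _).measurable.comp_aemeasurable hg.1.aemeasurable)
  -- pointwise convergence
  have hlim : ∀ y, Tendsto (fun n => ENNReal.ofReal (psi φ (hseq n) (Kseq n) (g y)))
      atTop (𝓝 (ENNReal.ofReal (φ (g y)))) := fun y =>
    (ENNReal.continuous_ofReal.tendsto _).comp (psi_tendsto hφconv hφpos hφ0 (hgpos y))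
  calc ∫⁻ y, ENNReal.ofReal (φ (g y)) ∂ν
      = ∫⁻ y, liminf (fun n => ENNReal.ofReal (psi φ (hseq n) (Kseq n) (g y))) atTop ∂ν :=
        lintegral_congr fun y => ((hlim y).liminf_eq).symm
    _ ≤ liminf (fun n => ∫⁻ y, ENNReal.ofReal (psi φ (hseq n) (Kseq n) (g y)) ∂ν) atTop :=
        lintegral_liminf_le' hmeas
    _ ≤ ∫⁻ x, ENNReal.ofReal (φ (f x)) ∂μ := by
        refine le_trans (liminf_le_liminf (Eventually.of_forall key)) ?_
        simp [liminf_const]
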